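/- If P₁,…,P_N ∈ ℝ^{n×n} are symmetric positive definite and P_i − A_iᵀ P_j A_i is positive definite for all i,j ∈ {1,…,N}, then every switched trajectory x_{k+1} = A_{σ(k)} x_k (with arbitrary switching signal σ : ℕ → {1,…,N}) converges to 0 as k → ∞. -/

import Mathlib

open Matrix

-- continuity of quadratic form
lemma quad_continuous {n : ℕ} (Q : Matrix (Fin n) (Fin n) ℝ) :
    Continuous fun x : Fin n → ℝ => x ⬝ᵥ Q *ᵥ x := by
  simp only [dotProduct, mulVec]
  exact continuous_finset_sum _ fun i _ =>
    (continuous_apply i).mul (continuous_finset_sum _ fun j _ =>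
      (continuous_const.mul (continuous_apply j)))

lemma dot_self_nonneg {n : ℕ} (x : Fin n → ℝ) : 0 ≤ x ⬝ᵥ x :=
  Finset.sum_nonneg fun i _ => mul_self_nonneg _

lemma sq_le_dot_self {n : ℕ} (x : Fin n → ℝ) (i : Fin n) : x i * x i ≤ x ⬝ᵥ x :=
  Finset.single_le_sum (fun j _ => mul_self_nonneg (x j)) (Finset.mem_univ i)

-- lower bound for positive definite quadratic forms
lemma posdef_lower {n : ℕ} {Q : Matrix (Fin n) (Fin n) ℝ} (hQ : Q.PosDef) :
    ∃ c > 0, ∀ x : Fin n → ℝ, c * (x ⬝ᵥ x) ≤ x ⬝ᵥ Q *ᵥ x := by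
  have hpos : ∀ x : Fin n → ℝ, x ≠ 0 → 0 < x ⬝ᵥ Q *ᵥ x := by
    intro x hx
    simpa using hQ.dotProduct_mulVec_pos hx
  rcases Nat.eq_zero_or_pos n with hn | hn
  · subst hn
    exact ⟨1, one_pos, fun x => by simp [dotProduct]⟩
  · set S : Set (Fin n → ℝ) := {x | x ⬝ᵥ x = 1} with hS
    have hcont : Continuous fun x : Fin n → ℝ => x ⬝ᵥ x := by
      simpa using quad_continuous (1 : Matrix (Fin n) (Fin n) ℝ)
    have hclosed : IsClosed S := isClosed_eq hcont continuous_const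
    have hbdd : Bornology.IsBounded S := by
      rw [Metric.isBounded_iff_subset_closedBall 0]
      refine ⟨1, fun x hx => ?_⟩
      simp only [Metric.mem_closedBall, dist_zero_right]
      rw [pi_norm_le_iff_of_nonneg zero_le_one]
      intro i
      have h1 : x i * x i ≤ 1 := (sq_le_dot_self x i).trans_eq hx
      rw [Real.norm_eq_abs]
      nlinarith [abs_nonneg (x i), sq_abs (x i)]
    have hcpt : IsCompact S := Metric.isCompact_of_isClosed_isBounded hclosed hbdd
    have hne : S.Nonempty := by
      refine ⟨Pi.single ⟨0, hn⟩ 1, ?_⟩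
      simp [hS, dotProduct, Pi.single_apply]
    obtain ⟨x₀, hx₀S, hx₀⟩ := hcpt.exists_isMinOn hne (quad_continuous Q).continuousOn
    have hx₀ne : x₀ ≠ 0 := by
      intro h
      rw [h] at hx₀S
      simp [hS] at hx₀S
    refine ⟨x₀ ⬝ᵥ Q *ᵥ x₀, hpos x₀ hx₀ne, fun x => ?_⟩
    rcases eq_or_ne x 0 with rfl | hxne
    · simp
    · have hxx : 0 < x ⬝ᵥ x := by
        rcases (dot_self_nonneg x).lt_or_eq with h | h
        · exact h
        · exact absurd (dotProduct_self_eq_zero.mp h.symm) hxne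
      set t : ℝ := Real.sqrt (x ⬝ᵥ x) with ht
      have htpos : 0 < t := Real.sqrt_pos.mpr hxx
      set y : Fin n → ℝ := t⁻¹ • x with hy
      have hyS : y ∈ S := by
        simp only [hS, Set.mem_setOf_eq, hy, smul_dotProduct, dotProduct_smul, smul_eq_mul]
        rw [← mul_assoc]
        field_simp [ht]
        rw [ht, Real.sq_sqrt hxx.le]
      have := hx₀ hyS
      have hyQ : y ⬝ᵥ Q *ᵥ y = (t⁻¹ * t⁻¹) * (x ⬝ᵥ Q *ᵥ x) := by
        simp [hy, smul_dotProduct, dotProduct_smul, mulVec_smul, smul_eq_mul, mul_assoc]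
      have ht2 : t * t = x ⬝ᵥ x := Real.mul_self_sqrt hxx.le
      have h1 : x₀ ⬝ᵥ Q *ᵥ x₀ ≤ (t⁻¹ * t⁻¹) * (x ⬝ᵥ Q *ᵥ x) := by
        simpa [hyQ] using this
      calc (x₀ ⬝ᵥ Q *ᵥ x₀) * (x ⬝ᵥ x) ≤ ((t⁻¹ * t⁻¹) * (x ⬝ᵥ Q *ᵥ x)) * (x ⬝ᵥ x) :=
            mul_le_mul_of_nonneg_right h1 hxx.le
        _ = x ⬝ᵥ Q *ᵥ x := by
            rw [← ht2]
            field_simp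

-- upper bound
lemma quad_upper {n : ℕ} (Q : Matrix (Fin n) (Fin n) ℝ) :
    ∃ C > 0, ∀ x : Fin n → ℝ, x ⬝ᵥ Q *ᵥ x ≤ C * (x ⬝ᵥ x) := by
  refine ⟨(∑ i, ∑ j, |Q i j|) + 1, by positivity, fun x => ?_⟩
  have key : ∀ i j : Fin n, x i * (Q i j * x j) ≤ |Q i j| * (x ⬝ᵥ x) := by
    intro i j
    have h1 : x i * x i ≤ x ⬝ᵥ x := sq_le_dot_self x i
    have h2 : x j * x j ≤ x ⬝ᵥ x := sq_le_dot_self x j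
    have h3 : x i * (Q i j * x j) ≤ |Q i j| * |x i * x j| := by
      calc x i * (Q i j * x j) = Q i j * (x i * x j) := by ring
      _ ≤ |Q i j * (x i * x j)| := le_abs_self _
      _ = |Q i j| * |x i * x j| := abs_mul _ _
    refine h3.trans (mul_le_mul_of_nonneg_left ?_ (abs_nonneg _))
    rcases abs_cases (x i * x j) with ⟨h, _⟩ | ⟨h, _⟩ <;> nlinarith
  calc x ⬝ᵥ Q *ᵥ x = ∑ i, ∑ j, x i * (Q i j * x j) := by
        simp [dotProduct, mulVec, Finset.mul_sum]
    _ ≤ ∑ i, ∑ j, |Q i j| * (x ⬝ᵥ x) := by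
        exact Finset.sum_le_sum fun i _ => Finset.sum_le_sum fun j _ => key i j
    _ = (∑ i, ∑ j, |Q i j|) * (x ⬝ᵥ x) := by rw [Finset.sum_mul]; congr 1; ext i; rw [Finset.sum_mul]
    _ ≤ ((∑ i, ∑ j, |Q i j|) + 1) * (x ⬝ᵥ x) := by
        have := dot_self_nonneg x; nlinarith

theorem poly_qs_implies_convergence {n N : ℕ}
    (A P : Fin N → Matrix (Fin n) (Fin n) ℝ)
    (hPsym : ∀ i, (P i).IsSymm) (hPpd : ∀ i, (P i).PosDef)
    (hdec : ∀ i j, (P i - (A i)ᵀ * P j * A i).PosDef)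
    (σ : ℕ → Fin N) (x : ℕ → (Fin n → ℝ))
    (hx : ∀ k, x (k + 1) = (A (σ k)).mulVec (x k)) :
    Filter.Tendsto x Filter.atTop (nhds 0) := by
  have hNne : Nonempty (Fin N) := ⟨σ 0⟩
  have key : ∀ i j : Fin N, ∃ μ : ℝ, μ < 1 ∧
      ∀ v : Fin n → ℝ, v ⬝ᵥ ((A i)ᵀ * P j * A i) *ᵥ v ≤ μ * (v ⬝ᵥ P i *ᵥ v) := by
    intro i j
    obtain ⟨c, hc, hcle⟩ := posdef_lower (hdec i j)
    obtain ⟨C, hC, hCle⟩ := quad_upper (P i)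
    have hM : (0:ℝ) < max C c := lt_max_of_lt_left hC
    refine ⟨1 - c / max C c, by simp [div_pos hc hM], fun v => ?_⟩
    have h1 : c * (v ⬝ᵥ v) ≤ v ⬝ᵥ P i *ᵥ v - v ⬝ᵥ ((A i)ᵀ * P j * A i) *ᵥ v := by
      have h := hcle v
      rwa [sub_mulVec, dotProduct_sub] at h
    have h2 : v ⬝ᵥ P i *ᵥ v ≤ max C c * (v ⬝ᵥ v) :=
      (hCle v).trans (mul_le_mul_of_nonneg_right (le_max_left _ _) (dot_self_nonneg v))
    have h3 : (c / max C c) * (v ⬝ᵥ P i *ᵥ v) ≤ c * (v ⬝ᵥ v) := by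
      have h4 : (c / max C c) * (v ⬝ᵥ P i *ᵥ v) ≤ (c / max C c) * (max C c * (v ⬝ᵥ v)) :=
        mul_le_mul_of_nonneg_left h2 (div_nonneg hc.le hM.le)
      have h5 : (c / max C c) * (max C c * (v ⬝ᵥ v)) = c * (v ⬝ᵥ v) := by
        field_simp
      linarith
    have hexp : (1 - c / max C c) * (v ⬝ᵥ P i *ᵥ v)
        = v ⬝ᵥ P i *ᵥ v - (c / max C c) * (v ⬝ᵥ P i *ᵥ v) := by ring
    linarith
  choose μ hμlt hμle using key
  have hNe : (Finset.univ : Finset (Fin N × Fin N)).Nonempty := Finset.univ_nonempty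
  set lam : ℝ := max (Finset.univ.sup' hNe fun p : Fin N × Fin N => μ p.1 p.2) 0 with hlam
  have hlam0 : 0 ≤ lam := le_max_right _ _
  have hlam1 : lam < 1 :=
    max_lt ((Finset.sup'_lt_iff hNe).mpr fun p _ => hμlt p.1 p.2) one_pos
  have hlamge : ∀ i j, μ i j ≤ lam := fun i j =>
    le_max_of_le_left (Finset.le_sup' (fun p : Fin N × Fin N => μ p.1 p.2) (Finset.mem_univ (i, j)))
  set V : ℕ → ℝ := fun k => x k ⬝ᵥ P (σ k) *ᵥ x k with hV
  have hVnonneg : ∀ k, 0 ≤ V k := by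
    intro k
    have := (hPpd (σ k)).posSemidef.dotProduct_mulVec_nonneg (x k)
    simpa using this
  have hstep : ∀ k, V (k + 1) ≤ lam * V k := by
    intro k
    have hq : V (k + 1) = x k ⬝ᵥ ((A (σ k))ᵀ * P (σ (k + 1)) * A (σ k)) *ᵥ x k := by
      simp only [hV, hx k]
      rw [← mulVec_mulVec, ← mulVec_mulVec]
      conv_rhs => rw [dotProduct_mulVec, vecMul_transpose]
    calc V (k + 1) = x k ⬝ᵥ ((A (σ k))ᵀ * P (σ (k + 1)) * A (σ k)) *ᵥ x k := hq
      _ ≤ μ (σ k) (σ (k + 1)) * V k := hμle _ _ _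
      _ ≤ lam * V k := mul_le_mul_of_nonneg_right (hlamge _ _) (hVnonneg k)
  have hgeo : ∀ k, V k ≤ lam ^ k * V 0 := by
    intro k
    induction k with
    | zero => simp
    | succ k ih =>
      calc V (k + 1) ≤ lam * V k := hstep k
        _ ≤ lam * (lam ^ k * V 0) := mul_le_mul_of_nonneg_left ih hlam0
        _ = lam ^ (k + 1) * V 0 := by ring
  choose cP hcP hcPle using fun i => posdef_lower (hPpd i)
  have hNe' : (Finset.univ : Finset (Fin N)).Nonempty := Finset.univ_nonempty
  set c := Finset.univ.inf' hNe' cP with hcdef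
  have hc0 : 0 < c := (Finset.lt_inf'_iff hNe').mpr fun i _ => hcP i
  have hbound : ∀ k, x k ⬝ᵥ x k ≤ (V 0 / c) * lam ^ k := by
    intro k
    have h1 : c * (x k ⬝ᵥ x k) ≤ V k := by
      calc c * (x k ⬝ᵥ x k) ≤ cP (σ k) * (x k ⬝ᵥ x k) :=
            mul_le_mul_of_nonneg_right (Finset.inf'_le _ (Finset.mem_univ _)) (dot_self_nonneg _)
        _ ≤ V k := hcPle (σ k) (x k)
    have h2 := hgeo k
    rw [div_mul_eq_mul_div, le_div_iff₀ hc0]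
    nlinarith
  rw [tendsto_pi_nhds]
  intro i
  simp only [Pi.zero_apply]
  have ha : Filter.Tendsto (fun k => Real.sqrt ((V 0 / c) * lam ^ k)) Filter.atTop (nhds 0) := by
    have h0 : Filter.Tendsto (fun k : ℕ => (V 0 / c) * lam ^ k) Filter.atTop (nhds 0) := by
      simpa using (tendsto_pow_atTop_nhds_zero_of_lt_one hlam0 hlam1).const_mul (V 0 / c)
    have := (Real.continuous_sqrt.tendsto 0).comp h0
    simpa [Function.comp_def] using this
  refine squeeze_zero_norm (fun k => ?_) ha
  have h1 : (x k i) * (x k i) ≤ (V 0 / c) * lam ^ k :=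
    (sq_le_dot_self (x k) i).trans (hbound k)
  rw [Real.norm_eq_abs, show |x k i| = Real.sqrt ((x k i) * (x k i)) from
    (Real.sqrt_mul_self_eq_abs _).symm]
  exact Real.sqrt_le_sqrt h1
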